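/- Let A₁ and A₂ be disjoint subsets of {1,…,n} with |A₂| = 2m even and |A₁| = a ≥ 1, and let P₁, …, P_k (k ≥ 1) be partitions of A₂ into pairs that are pairwise disjoint as sets of pairs (no pair belongs to two of the partitions). For each t let W^(t) be the set of vertices of G(n,3,1) of the form {x} ∪ e with x ∈ A₁ and e ∈ P_t. Then for every vertex v ∈ W^(1), the number of vertices u ∈ W^(2) ∪ … ∪ W^(k) adjacent to v in G(n,3,1) equals (k−1)·((m−2) + 2·(a−1)). -/

import Mathlib

/-- The vertices of `G(n,3,1)`: 3-element subsets of `{1, …, n}`. -/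
abbrev Vtx (n : ℕ) := {s : Finset ℕ // s ⊆ Finset.Icc 1 n ∧ s.card = 3}

/-- The graph `G(n,3,1)`: two 3-element subsets of `{1, …, n}` are adjacent
iff they intersect in exactly one element. -/
def G (n : ℕ) : SimpleGraph (Vtx n) where
  Adj a b := (a.1 ∩ b.1).card = 1
  symm := ⟨fun a b (h : (a.1 ∩ b.1).card = 1) => (show (b.1 ∩ a.1).card = 1 by rwa [Finset.inter_comm])⟩
  loopless := ⟨fun a (h : (a.1 ∩ a.1).card = 1) => by rw [Finset.inter_self, a.2.2] at h; omega⟩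

instance (n : ℕ) : DecidableRel (G n).Adj := fun a b =>
  inferInstanceAs (Decidable ((a.1 ∩ b.1).card = 1))

instance (n : ℕ) : Fintype (Vtx n) :=
  Fintype.subtype ((Finset.Icc 1 n).powerset.filter fun s => s.card = 3) (by
    intro s
    simp [Finset.mem_powerset, and_comm])

instance (n : ℕ) (s : Set (Vtx n)) : DecidableRel ((G n).induce s).Adj := fun a b =>
  inferInstanceAs (Decidable (((a : Vtx n).1 ∩ (b : Vtx n).1).card = 1))

/-- The number of edges of `G(n,3,1)` with both endpoints in `W`. -/
def edgesIn (n : ℕ) (W : Finset (Vtx n)) : ℕ :=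
  ((G n).induce (W : Set (Vtx n))).edgeFinset.card

/-- The independence number of `G(n,3,1)`. -/
noncomputable def alpha (n : ℕ) : ℕ :=
  sSup {k | ∃ W : Finset (Vtx n), W.card = k ∧ ∀ u ∈ W, ∀ v ∈ W, ¬ (G n).Adj u v}

/-- The minimal number of edges induced on a vertex subset of cardinality `l`. -/
noncomputable def rmin (n l : ℕ) : ℕ :=
  sInf {m | ∃ W : Finset (Vtx n), W.card = l ∧ edgesIn n W = m}

/-- Let `A₁, A₂ ⊆ {1, …, n}` be disjoint with `|A₂| = 2m` and `|A₁| = a ≥ 1`, and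
let `P₁, …, P_k` (`k ≥ 1`) be pairwise disjoint partitions of `A₂` into pairs.
Let `W⁽ᵗ⁾` be the set of vertices of `G(n,3,1)` of the form `{x} ∪ e`, `x ∈ A₁`,
`e ∈ P_t`. Then every `v ∈ W⁽¹⁾` has exactly `(k−1)·((m−2) + 2(a−1))` neighbours
in `W⁽²⁾ ∪ ⋯ ∪ W⁽ᵏ⁾`. -/
theorem stmt_10 (n m a k : ℕ) (hk : 1 ≤ k) (ha : 1 ≤ a) (A₁ A₂ : Finset ℕ)
    (hA₁ : A₁ ⊆ Finset.Icc 1 n) (hA₂ : A₂ ⊆ Finset.Icc 1 n) (hdisj : Disjoint A₁ A₂)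
    (hA₁card : A₁.card = a) (hA₂card : A₂.card = 2 * m)
    (P : Fin k → Finset (Finset ℕ))
    (hPpair : ∀ t, ∀ e ∈ P t, e.card = 2)
    (hPdisj : ∀ t, ((P t : Set (Finset ℕ))).Pairwise Disjoint)
    (hPunion : ∀ t, (P t).biUnion id = A₂)
    (hPP : ∀ t t', t ≠ t' → Disjoint (P t) (P t'))
    (W : Fin k → Finset (Vtx n))
    (hW : ∀ t, ∀ v : Vtx n, v ∈ W t ↔ ∃ x ∈ A₁, ∃ e ∈ P t, v.1 = insert x e)
    (v : Vtx n) (hv : v ∈ W ⟨0, hk⟩) :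
    (((Finset.univ.erase (⟨0, hk⟩ : Fin k)).biUnion W).filter
        fun u => (G n).Adj v u).card = (k - 1) * ((m - 2) + 2 * (a - 1)) := by
  classical
  set t₀ : Fin k := ⟨0, hk⟩ with ht₀
  -- basic facts
  have hPsub : ∀ t, ∀ f ∈ P t, f ⊆ A₂ := by
    intro t f hf z hz
    rw [← hPunion t]; exact Finset.mem_biUnion.2 ⟨f, hf, hz⟩
  have huniq : ∀ t, ∀ f ∈ P t, ∀ f' ∈ P t, ∀ z, z ∈ f → z ∈ f' → f = f' := by
    intro t f hf f' hf' z hz hz'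
    by_contra hne
    exact Finset.disjoint_left.1 (hPdisj t hf hf' hne) hz hz'
  have hexists : ∀ t, ∀ z ∈ A₂, ∃ f ∈ P t, z ∈ f := by
    intro t z hz
    rw [← hPunion t] at hz
    simpa using hz
  have hPcard : ∀ t, (P t).card = m := by
    intro t
    have h1 : ((P t).biUnion id).card = ∑ f ∈ P t, f.card := by
      apply Finset.card_biUnion
      intro x hx y hy hxy
      exact hPdisj t hx hy hxy
    rw [hPunion t] at h1
    have h2 : ∑ f ∈ P t, f.card = 2 * (P t).card := by
      rw [Finset.sum_congr rfl (hPpair t), Finset.sum_const, smul_eq_mul, mul_comm]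
    omega
  -- decompose insert y f = insert y' f'
  have hsep : ∀ y ∈ A₁, ∀ f, f ⊆ A₂ → ∀ y' ∈ A₁, ∀ f', f' ⊆ A₂ →
      insert y f = insert y' f' → y = y' ∧ f = f' := by
    intro y hy f hf y' hy' f' hf' heq
    have hff' : f = f' := by
      ext z
      constructor
      · intro hz
        have : z ∈ insert y' f' := heq ▸ Finset.mem_insert_of_mem hz
        rcases Finset.mem_insert.1 this with h | h
        · exact absurd (hf hz) (fun hh => Finset.disjoint_left.1 hdisj (h ▸ hy') hh)
        · exact h
      · intro hz
        have : z ∈ insert y f := heq ▸ Finset.mem_insert_of_mem hz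
        rcases Finset.mem_insert.1 this with h | h
        · exact absurd (hf' hz) (fun hh => Finset.disjoint_left.1 hdisj (h ▸ hy) hh)
        · exact h
    refine ⟨?_, hff'⟩
    have : y ∈ insert y' f' := heq ▸ Finset.mem_insert_self y f
    rcases Finset.mem_insert.1 this with h | h
    · exact h
    · exact absurd (hf' h) (Finset.disjoint_left.1 hdisj hy)
  -- extract v
  obtain ⟨x, hxA, e, heP, hve⟩ := (hW t₀ v).1 hv
  have heA₂ : e ⊆ A₂ := hPsub t₀ e heP
  obtain ⟨p, q, hpq, hepq⟩ := Finset.card_eq_two.1 (hPpair t₀ e heP)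
  have hpA₂ : p ∈ A₂ := heA₂ (by simp [hepq])
  have hqA₂ : q ∈ A₂ := heA₂ (by simp [hepq])
  have hxe : x ∉ e := fun h => Finset.disjoint_left.1 hdisj hxA (heA₂ h)
  -- per-t count
  have key : ∀ t ∈ Finset.univ.erase t₀,
      ((W t).filter (fun u => (G n).Adj v u)).card = (m - 2) + 2 * (a - 1) := by
    intro t ht
    have htne : t ≠ t₀ := (Finset.mem_erase.1 ht).1
    have hePt : e ∉ P t := fun h => Finset.disjoint_left.1 (hPP t t₀ htne) h heP
    obtain ⟨fp, hfpP, hpfp⟩ := hexists t p hpA₂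
    obtain ⟨fq, hfqP, hqfq⟩ := hexists t q hqA₂
    have hmemiff : ∀ f ∈ P t, (p ∈ f ↔ f = fp) := by
      intro f hf
      exact ⟨fun h => huniq t f hf fp hfpP p h hpfp, fun h => h ▸ hpfp⟩
    have hmemiffq : ∀ f ∈ P t, (q ∈ f ↔ f = fq) := by
      intro f hf
      exact ⟨fun h => huniq t f hf fq hfqP q h hqfq, fun h => h ▸ hqfq⟩
    have hqfp : q ∉ fp := by
      intro h
      have : e ⊆ fp := by rw [hepq]; intro z hz; rcases Finset.mem_insert.1 hz with h'|h'
                          · exact h' ▸ hpfp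
                          · exact (Finset.mem_singleton.1 h') ▸ h
      have := Finset.eq_of_subset_of_card_le this (by rw [hPpair t fp hfpP, hPpair t₀ e heP])
      exact hePt (this ▸ hfpP)
    have hpfq : p ∉ fq := by
      intro h
      have : e ⊆ fq := by rw [hepq]; intro z hz; rcases Finset.mem_insert.1 hz with h'|h'
                          · exact h' ▸ h
                          · exact (Finset.mem_singleton.1 h') ▸ hqfq
      have := Finset.eq_of_subset_of_card_le this (by rw [hPpair t fq hfqP, hPpair t₀ e heP])
      exact hePt (this ▸ hfqP)
    have hfpfq : fp ≠ fq := fun h => hqfp (h ▸ hqfq)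
    -- intersection computation
    have hinter : ∀ y ∈ A₁, ∀ f ∈ P t,
        (insert x e ∩ insert y f).card = 1 ↔
        ((y = x ∧ f ≠ fp ∧ f ≠ fq) ∨ (y ≠ x ∧ (f = fp ∨ f = fq))) := by
      intro y hy f hf
      have hfA₂ : f ⊆ A₂ := hPsub t f hf
      have hye : y ∉ e := fun h => Finset.disjoint_left.1 hdisj hy (heA₂ h)
      have hyf : y ∉ f := fun h => Finset.disjoint_left.1 hdisj hy (hfA₂ h)
      have hxf : x ∉ f := fun h => Finset.disjoint_left.1 hdisj hxA (hfA₂ h)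
      have hefcard : (e ∩ f).card = (if f = fp then 1 else 0) + (if f = fq then 1 else 0) := by
        rw [hepq]
        by_cases h1 : f = fp <;> by_cases h2 : f = fq
        · exact absurd (h1.symm.trans h2) hfpfq
        · have hpf : p ∈ f := (hmemiff f hf).2 h1
          have hqf : q ∉ f := fun h => h2 ((hmemiffq f hf).1 h)
          rw [if_pos h1, if_neg h2]
          have : ({p, q} : Finset ℕ) ∩ f = {p} := by
            ext z; simp only [Finset.mem_inter, Finset.mem_insert, Finset.mem_singleton]
            constructor
            · rintro ⟨h | h, hz⟩
              · exact h
              · exact absurd (h ▸ hz) hqf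
            · rintro rfl; exact ⟨Or.inl rfl, hpf⟩
          rw [this, Finset.card_singleton]
        · have hqf : q ∈ f := (hmemiffq f hf).2 h2
          have hpf : p ∉ f := fun h => h1 ((hmemiff f hf).1 h)
          rw [if_neg h1, if_pos h2]
          have : ({p, q} : Finset ℕ) ∩ f = {q} := by
            ext z; simp only [Finset.mem_inter, Finset.mem_insert, Finset.mem_singleton]
            constructor
            · rintro ⟨h | h, hz⟩
              · exact absurd (h ▸ hz) hpf
              · exact h
            · rintro rfl; exact ⟨Or.inr rfl, hqf⟩
          rw [this, Finset.card_singleton]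
        · have hpf : p ∉ f := fun h => h1 ((hmemiff f hf).1 h)
          have hqf : q ∉ f := fun h => h2 ((hmemiffq f hf).1 h)
          rw [if_neg h1, if_neg h2]
          have : ({p, q} : Finset ℕ) ∩ f = ∅ := by
            ext z; simp only [Finset.mem_inter, Finset.mem_insert, Finset.mem_singleton,
              Finset.notMem_empty, iff_false, not_and]
            rintro (rfl | rfl) <;> assumption
          rw [this, Finset.card_empty]
      by_cases hyx : y = x
      · subst hyx
        have h1 : insert y e ∩ insert y f = insert y (e ∩ f) := by
          rw [Finset.insert_inter_of_mem (Finset.mem_insert_self y f),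
              Finset.inter_insert_of_notMem hye]
        rw [h1, Finset.card_insert_of_notMem (fun h => hye (Finset.mem_inter.1 h).1)]
        rw [hefcard]
        by_cases h1 : f = fp <;> by_cases h2 : f = fq
        · exact absurd (h1.symm.trans h2) hfpfq
        · simp [h1, h2]
        · simp [h1, h2]
        · simp [h1, h2]
      · have h1 : insert x e ∩ insert y f = e ∩ f := by
          rw [Finset.insert_inter_of_notMem, Finset.inter_insert_of_notMem hye]
          simp only [Finset.mem_insert, not_or]
          exact ⟨fun h => hyx h.symm, hxf⟩
        rw [h1, hefcard]
        by_cases h1 : f = fp <;> by_cases h2 : f = fq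
        · exact absurd (h1.symm.trans h2) hfpfq
        · simp [h1, h2, hyx]
          exact hfpfq
        · simp [h1, h2, hyx]
          exact fun h => hfpfq h.symm
        · simp [h1, h2, hyx]
    -- the parameter set
    set S : Finset (ℕ × Finset ℕ) := (A₁ ×ˢ P t).filter
      (fun yf => (yf.1 = x ∧ yf.2 ≠ fp ∧ yf.2 ≠ fq) ∨ (yf.1 ≠ x ∧ (yf.2 = fp ∨ yf.2 = fq)))
      with hS
    have hScond : ∀ yf : ℕ × Finset ℕ, yf ∈ S ↔ yf.1 ∈ A₁ ∧ yf.2 ∈ P t ∧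
        ((yf.1 = x ∧ yf.2 ≠ fp ∧ yf.2 ≠ fq) ∨ (yf.1 ≠ x ∧ (yf.2 = fp ∨ yf.2 = fq))) := by
      intro yf
      rw [hS, Finset.mem_filter, Finset.mem_product]
      tauto
    have hmk : ∀ yf : ℕ × Finset ℕ, yf ∈ S →
        insert yf.1 yf.2 ⊆ Finset.Icc 1 n ∧ (insert yf.1 yf.2).card = 3 := by
      intro yf hyf
      obtain ⟨hy, hf, -⟩ := (hScond yf).1 hyf
      constructor
      · intro z hz
        rcases Finset.mem_insert.1 hz with rfl | hz
        · exact hA₁ hy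
        · exact hA₂ (hPsub t _ hf hz)
      · rw [Finset.card_insert_of_notMem
          (fun h => Finset.disjoint_left.1 hdisj hy (hPsub t _ hf h)), hPpair t _ hf]
    have hcard_eq : ((W t).filter (fun u => (G n).Adj v u)).card = S.card := by
      refine (Finset.card_bij (fun yf hyf => (⟨insert yf.1 yf.2, hmk yf hyf⟩ : Vtx n))
        ?_ ?_ ?_).symm
      · intro yf hyf
        obtain ⟨hy, hf, hcond⟩ := (hScond yf).1 hyf
        rw [Finset.mem_filter]
        constructor
        · exact (hW t _).2 ⟨yf.1, hy, yf.2, hf, rfl⟩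
        · show (v.1 ∩ insert yf.1 yf.2).card = 1
          rw [hve]
          exact (hinter yf.1 hy yf.2 hf).2 hcond
      · intro yf1 h1 yf2 h2 heq
        obtain ⟨hy1, hf1, -⟩ := (hScond yf1).1 h1
        obtain ⟨hy2, hf2, -⟩ := (hScond yf2).1 h2
        have : insert yf1.1 yf1.2 = insert yf2.1 yf2.2 := congrArg Subtype.val heq
        obtain ⟨h1', h2'⟩ := hsep yf1.1 hy1 yf1.2 (hPsub t _ hf1) yf2.1 hy2 yf2.2
          (hPsub t _ hf2) this
        exact Prod.ext h1' h2'
      · intro u hu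
        rw [Finset.mem_filter] at hu
        obtain ⟨huW, huadj⟩ := hu
        obtain ⟨y, hy, f, hf, hu1⟩ := (hW t u).1 huW
        have hcond : (y = x ∧ f ≠ fp ∧ f ≠ fq) ∨ (y ≠ x ∧ (f = fp ∨ f = fq)) := by
          apply (hinter y hy f hf).1
          have : (v.1 ∩ u.1).card = 1 := huadj
          rwa [hve, hu1] at this
        exact ⟨(y, f), (hScond (y, f)).2 ⟨hy, hf, hcond⟩, Subtype.ext hu1.symm⟩
    have hsub2 : ({fp, fq} : Finset (Finset ℕ)) ⊆ P t := by
      intro f hf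
      rcases Finset.mem_insert.1 hf with rfl | hf
      · exact hfpP
      · exact (Finset.mem_singleton.1 hf) ▸ hfqP
    have hpair2 : ({fp, fq} : Finset (Finset ℕ)).card = 2 := by
      rw [Finset.card_insert_of_notMem (by simpa using hfpfq), Finset.card_singleton]
    have hSeq : S = ({x} ×ˢ (P t \ {fp, fq})) ∪
        ((A₁.erase x) ×ˢ ({fp, fq} : Finset (Finset ℕ))) := by
      ext yf
      rw [hScond yf]
      simp only [Finset.mem_union, Finset.mem_product, Finset.mem_sdiff, Finset.mem_singleton,
        Finset.mem_insert, Finset.mem_erase]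
      constructor
      · rintro ⟨hy, hf, (⟨rfl, h2, h3⟩ | ⟨h1, h2⟩)⟩
        · exact Or.inl ⟨rfl, hf, by tauto⟩
        · exact Or.inr ⟨⟨h1, hy⟩, h2⟩
      · rintro (⟨rfl, hf, hnot⟩ | ⟨⟨hyx, hy⟩, h⟩)
        · exact ⟨hxA, hf, Or.inl ⟨rfl, by tauto⟩⟩
        · refine ⟨hy, ?_, Or.inr ⟨hyx, h⟩⟩
          rcases h with rfl | rfl
          · exact hfpP
          · exact hfqP
    have hScard : S.card = (m - 2) + 2 * (a - 1) := by
      rw [hSeq, Finset.card_union_of_disjoint, Finset.card_product, Finset.card_product,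
        Finset.card_sdiff_of_subset hsub2, hpair2, hPcard t, Finset.card_singleton,
        Finset.card_erase_of_mem hxA, hA₁card]
      · omega
      · rw [Finset.disjoint_left]
        rintro ⟨y, f⟩ h1 h2
        rw [Finset.mem_product] at h1 h2
        have := Finset.mem_singleton.1 h1.1
        exact (Finset.mem_erase.1 h2.1).1 this
    rw [hcard_eq, hScard]
  -- assemble
  have hWfd : ∀ t₁ ∈ Finset.univ.erase t₀, ∀ t₂ ∈ Finset.univ.erase t₀, t₁ ≠ t₂ →
      Disjoint ((W t₁).filter (fun u => (G n).Adj v u))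
        ((W t₂).filter (fun u => (G n).Adj v u)) := by
    intro t₁ _ t₂ _ hne
    apply Finset.disjoint_filter_filter
    rw [Finset.disjoint_left]
    intro u hu1 hu2
    obtain ⟨y, hy, f, hf, he1⟩ := (hW t₁ u).1 hu1
    obtain ⟨y', hy', f', hf', he2⟩ := (hW t₂ u).1 hu2
    obtain ⟨-, hff'⟩ := hsep y hy f (hPsub t₁ f hf) y' hy' f' (hPsub t₂ f' hf')
      (he1.symm.trans he2)
    exact Finset.disjoint_left.1 (hPP t₁ t₂ hne) hf (hff' ▸ hf')
  rw [Finset.filter_biUnion, Finset.card_biUnion hWfd, Finset.sum_congr rfl key,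
    Finset.sum_const, smul_eq_mul, Finset.card_erase_of_mem (Finset.mem_univ _),
    Finset.card_univ, Fintype.card_fin]
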